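/- Let p be a prime, let ι be a finite index set with |ι| ≥ 2, and for each i ∈ ι let R_i be a finite commutative local ring with maximal ideal M_i; set R = ∏_{i∈ι} R_i and assume -1 ∈ (R^×)^p. Then the p-unitary Cayley graph G_R(p) is prime if and only if all of the following hold: (1) for each i, the graph G_{R_i}(p) is connected; (2) G_R(p) is connected; (3) for each i such that p is invertible in R_i, the ring R_i is a field; (4) for each i such that p is not invertible in R_i, one has M_i = pR_i and p^2·R_i = 0. -/

import Mathlib

def pUnitaryCayley (R : Type*) [CommRing R] (p : ℕ) : SimpleGraph R :=
  SimpleGraph.fromRel (fun a b => ∃ u : Rˣ, a - b = (u : R) ^ p)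
def SimpleGraph.IsHomogeneousSet {V : Type*} (G : SimpleGraph V) (X : Set V) : Prop :=
  ∀ v ∉ X, (∀ x ∈ X, G.Adj v x) ∨ (∀ x ∈ X, ¬ G.Adj v x)
def SimpleGraph.IsPrimeGraph {V : Type*} [Fintype V] (G : SimpleGraph V) : Prop :=
  ∀ X : Set V, G.IsHomogeneousSet X → ¬(2 ≤ X.ncard ∧ X.ncard < Fintype.card V)
namespace PUC
variable (p : ℕ)
/-- the set of p-th powers of units -/
def pS (B : Type*) [CommRing B] : Set B := {x | ∃ u : Bˣ, (u : B) ^ p = x}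
variable {B : Type*} [CommRing B]
/-- symmetry hypothesis -/
def Hneg (B : Type*) [CommRing B] (p : ℕ) : Prop := ∃ u : Bˣ, (u : B) ^ p = -1
lemma one_mem_pS : (1 : B) ∈ pS p B := ⟨1, by simp⟩
lemma mul_mem_pS {x y : B} (hx : x ∈ pS p B) (hy : y ∈ pS p B) : x * y ∈ pS p B := by
  obtain ⟨u, hu⟩ := hx; obtain ⟨v, hv⟩ := hy
  exact ⟨u * v, by rw [Units.val_mul, mul_pow, hu, hv]⟩
lemma isUnit_of_mem_pS {x : B} (hx : x ∈ pS p B) : IsUnit x := by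
  obtain ⟨u, hu⟩ := hx; exact hu ▸ (u ^ p).isUnit
lemma zero_not_mem_pS [Nontrivial B] : (0 : B) ∉ pS p B := by
  intro h; exact (isUnit_of_mem_pS p h).ne_zero rfl
lemma exists_inv_pS {x : B} (hx : x ∈ pS p B) : ∃ y ∈ pS p B, x * y = 1 := by
  obtain ⟨u, hu⟩ := hx
  exact ⟨((u⁻¹ : Bˣ) : B) ^ p, ⟨u⁻¹, rfl⟩, by
    rw [← hu, ← mul_pow]; simp⟩
lemma neg_mem_pS (hneg : Hneg B p) {x : B} (hx : x ∈ pS p B) : -x ∈ pS p B := by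
  obtain ⟨u, hu⟩ := hneg
  have := mul_mem_pS p ⟨u, hu⟩ hx
  rwa [neg_one_mul] at this
lemma neg_mem_pS_iff (hneg : Hneg B p) {x : B} : -x ∈ pS p B ↔ x ∈ pS p B := by
  constructor
  · intro h; simpa using neg_mem_pS p hneg h
  · exact neg_mem_pS p hneg
lemma adj_iff (hneg : Hneg B p) {a b : B} :
    (pUnitaryCayley B p).Adj a b ↔ a ≠ b ∧ a - b ∈ pS p B := by
  rw [pUnitaryCayley, SimpleGraph.fromRel_adj]
  constructor
  · rintro ⟨h, h2 | h2⟩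
    · obtain ⟨u, hu⟩ := h2; exact ⟨h, ⟨u, hu.symm⟩⟩
    · obtain ⟨u, hu⟩ := h2
      refine ⟨h, ?_⟩
      have : -(b - a) ∈ pS p B := neg_mem_pS p hneg ⟨u, hu.symm⟩
      rwa [neg_sub] at this
  · rintro ⟨h, u, hu⟩
    exact ⟨h, Or.inl ⟨u, hu.symm⟩⟩
/-- translation graph isomorphism -/
def addIso (c : B) : pUnitaryCayley B p ≃g pUnitaryCayley B p where
  toEquiv := Equiv.addRight c
  map_rel_iff' := by
    intro a b
    simp only [Equiv.coe_addRight, pUnitaryCayley, SimpleGraph.fromRel_adj,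
      add_sub_add_right_eq_sub, ne_eq, add_left_inj]
lemma reachable_add {a b : B} (c : B) (h : (pUnitaryCayley B p).Reachable a b) :
    (pUnitaryCayley B p).Reachable (a + c) (b + c) :=
  SimpleGraph.Reachable.map (addIso p c).toHom h
lemma connected_iff (hneg : Hneg B p) [Nontrivial B] :
    (pUnitaryCayley B p).Connected ↔ AddSubgroup.closure (pS p B) = ⊤ := by
  constructor
  · intro h
    rw [eq_top_iff]
    have key : ∀ a b : B, (pUnitaryCayley B p).Walk a b →
        a - b ∈ AddSubgroup.closure (pS p B) := by
      intro a b w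
      induction w with
      | nil => simpa using AddSubgroup.zero_mem _
      | @cons u v _ ha _ ih =>
        have huv : u - v ∈ AddSubgroup.closure (pS p B) := by
          rcases (adj_iff p hneg).1 ha with ⟨_, h2⟩
          exact AddSubgroup.subset_closure h2
        have := AddSubgroup.add_mem _ huv ih
        simpa using this
    intro x _
    obtain ⟨w⟩ := h.preconnected x 0
    simpa using key x 0 w
  · intro h
    rw [SimpleGraph.connected_iff]
    refine ⟨?_, ⟨0⟩⟩
    have key : ∀ x : B, (pUnitaryCayley B p).Reachable 0 x := by
      intro x
      have hx : x ∈ AddSubgroup.closure (pS p B) := by rw [h]; trivial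
      induction hx using AddSubgroup.closure_induction with
      | mem y hy =>
        refine SimpleGraph.Adj.reachable ?_ |>.symm
        rw [adj_iff p hneg]
        have hy0 : y ≠ 0 := fun hy0 => zero_not_mem_pS p (hy0 ▸ hy)
        exact ⟨hy0, by simpa using hy⟩
      | zero => exact SimpleGraph.Reachable.refl _
      | add y z _ _ hy hz =>
        refine hy.trans ?_
        have := reachable_add p y hz
        simpa [add_comm] using this
      | neg y _ hy =>
        have := reachable_add p (-y) hy
        simpa using this.symm
    intro a b
    exact (key a).symm.trans (key b)
section
variable (p : ℕ) (B : Type*) [CommRing B]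
/-- m-fold sumset of pS -/
def pSum : ℕ → Set B
  | 0 => {0}
  | (m+1) => {x | ∃ a ∈ pSum m, ∃ s ∈ pS p B, x = a + s}
/-- stabilizer set -/
def pT : Set B := {c | ∀ s ∈ pS p B, s + c ∈ pS p B}
end
section
variable {p : ℕ} {B : Type*} [CommRing B]
lemma pSum_nonempty (m : ℕ) : (pSum p B m).Nonempty := by
  induction m with
  | zero => exact ⟨0, rfl⟩
  | succ m ih =>
    obtain ⟨a, ha⟩ := ih
    exact ⟨a + 1, a, ha, 1, ⟨1, by simp⟩, rfl⟩
lemma pSum_subset_closure (m : ℕ) : pSum p B m ⊆ (AddSubgroup.closure (pS p B) : Set B) := by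
  induction m with
  | zero => rintro x rfl; exact AddSubgroup.zero_mem _
  | succ m ih =>
    rintro x ⟨a, ha, s, hs, rfl⟩
    exact AddSubgroup.add_mem _ (ih ha) (AddSubgroup.subset_closure hs)
lemma add_mem_pSum {m : ℕ} {a s : B} (ha : a ∈ pSum p B m) (hs : s ∈ pS p B) :
    a + s ∈ pSum p B (m+1) := ⟨a, ha, s, hs, rfl⟩
lemma pSum_add_mem {m n : ℕ} {a b : B} (ha : a ∈ pSum p B m) (hb : b ∈ pSum p B n) :
    a + b ∈ pSum p B (m + n) := by
  induction n generalizing b with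
  | zero =>
    have hb0 : b = 0 := hb
    subst hb0; simpa using ha
  | succ n ih =>
    obtain ⟨c, hc, s, hs, rfl⟩ := hb
    exact ⟨a + c, ih hc, s, hs, by ring⟩
lemma neg_mem_pSum (hneg : Hneg B p) {m : ℕ} {a : B} (ha : a ∈ pSum p B m) :
    -a ∈ pSum p B m := by
  have negS : ∀ x ∈ pS p B, -x ∈ pS p B := by
    rintro x ⟨u, rfl⟩
    obtain ⟨w, hw⟩ := hneg
    exact ⟨w * u, by rw [Units.val_mul, mul_pow, hw]; ring⟩
  induction m generalizing a with
  | zero =>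
    have ha0 : a = 0 := ha
    subst ha0
    show (-0 : B) ∈ ({0} : Set B)
    simp
  | succ m ih =>
    obtain ⟨c, hc, s, hs, rfl⟩ := ha
    exact ⟨-c, ih hc, -s, negS s hs, by ring⟩
lemma mem_pSum_of_closure (hneg : Hneg B p) {x : B}
    (hx : x ∈ AddSubgroup.closure (pS p B)) : ∃ m, x ∈ pSum p B m := by
  induction hx using AddSubgroup.closure_induction with
  | mem y hy => exact ⟨1, 0, rfl, y, hy, (zero_add y).symm⟩
  | zero => exact ⟨0, rfl⟩
  | add y z _ _ hy hz =>
    obtain ⟨m, hm⟩ := hy; obtain ⟨n, hn⟩ := hz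
    exact ⟨m + n, pSum_add_mem hm hn⟩
  | neg y _ hy =>
    obtain ⟨m, hm⟩ := hy
    exact ⟨m, neg_mem_pSum hneg hm⟩
variable [Fintype B]
omit [Fintype B] in
lemma zero_mem_pT : (0 : B) ∈ pT p B := by intro s hs; simpa using hs
lemma pT_sub_mem {c d : B} (hc : c ∈ pT p B) (hd : d ∈ pT p B) : c - d ∈ pT p B := by
  -- key: S + c = S as sets, via finiteness
  have key : ∀ e ∈ pT p B, ∀ s ∈ pS p B, s - e ∈ pS p B := by
    intro e he
    have himg : (fun x => x + e) '' (pS p B) = pS p B := by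
      apply Set.eq_of_subset_of_ncard_le
      · rintro x ⟨y, hy, rfl⟩; exact he y hy
      · rw [Set.ncard_image_of_injective _ (add_left_injective e)]
      · exact Set.toFinite _
    intro s hs
    obtain ⟨y, hy, hye⟩ : s ∈ (fun x => x + e) '' (pS p B) := by rw [himg]; exact hs
    have : y = s - e := by rw [← hye]; ring
    rwa [this] at hy
  intro s hs
  have h1 : s - d ∈ pS p B := key d hd s hs
  have h2 : (s - d) + c ∈ pS p B := hc _ h1
  have : s + (c - d) = (s - d) + c := by ring
  rwa [this]
end
section Product
variable {p : ℕ} {ι : Type*} {R : ι → Type*} [∀ i, CommRing (R i)]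
/-- component unit of a unit of a product ring -/
def piUnitComponent (u : (∀ i, R i)ˣ) (i : ι) : (R i)ˣ :=
  ⟨(u : ∀ i, R i) i, ((u⁻¹ : (∀ i, R i)ˣ) : ∀ i, R i) i,
    congrFun u.val_inv i, congrFun u.inv_val i⟩
lemma mem_pS_pi {x : ∀ i, R i} : x ∈ pS p (∀ i, R i) ↔ ∀ i, x i ∈ pS p (R i) := by
  constructor
  · rintro ⟨u, rfl⟩ i
    exact ⟨piUnitComponent u i, rfl⟩
  · intro h
    choose u hu using h
    refine ⟨⟨fun i => (u i : R i), fun i => ((u i)⁻¹ : (R i)ˣ), ?_, ?_⟩, ?_⟩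
    · funext i; simp
    · funext i; simp
    · funext i; exact hu i
lemma hneg_pi_component (hneg : Hneg (∀ i, R i) p) (i : ι) : Hneg (R i) p := by
  obtain ⟨u, hu⟩ := hneg
  refine ⟨piUnitComponent u i, ?_⟩
  have : ((u : ∀ i, R i) ^ p) i = (-1 : ∀ i, R i) i := by rw [hu]
  simpa [piUnitComponent] using this
end Product
section Necessity
variable {p : ℕ} {ι : Type*} [Fintype ι] [DecidableEq ι] {R : ι → Type*} [∀ i, CommRing (R i)]
  [∀ i, IsLocalRing (R i)] [∀ i, Fintype (R i)]
lemma not_prime_of_subgroup [Nonempty ι] (hneg : Hneg (∀ i, R i) p)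
    (H : AddSubgroup (∀ i, R i)) (hS : pS p (∀ i, R i) ⊆ H) (hne : H ≠ ⊤) :
    ¬ (pUnitaryCayley (∀ i, R i) p).IsPrimeGraph := by
  haveI : Nontrivial (∀ i, R i) := Pi.nontrivial_at (Classical.arbitrary ι)
  intro hprime
  refine hprime (H : Set (∀ i, R i)) ?_ ⟨?_, ?_⟩
  · intro v hv
    right
    intro x hx hadj
    rw [adj_iff p hneg] at hadj
    have : v - x ∈ H := hS hadj.2
    have : v ∈ H := by
      have := H.add_mem this hx
      simpa using this
    exact hv this
  · exact (Set.one_lt_ncard_iff (Set.toFinite _)).2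
      ⟨0, 1, H.zero_mem, hS (one_mem_pS p), zero_ne_one⟩
  · have hssub : (H : Set (∀ i, R i)) ⊂ Set.univ := by
      rw [Set.ssubset_univ_iff]
      intro h
      exact hne (AddSubgroup.coe_eq_univ.mp h)
    calc (H : Set (∀ i, R i)).ncard < (Set.univ : Set (∀ i, R i)).ncard :=
          Set.ncard_lt_ncard hssub (Set.toFinite _)
      _ = Fintype.card (∀ i, R i) := by rw [Set.ncard_univ, Nat.card_eq_fintype_card]
lemma not_prime_of_factor_not_closed [Nonempty ι] (hneg : Hneg (∀ i, R i) p) (j : ι)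
    (hj : AddSubgroup.closure (pS p (R j)) ≠ ⊤) :
    ¬ (pUnitaryCayley (∀ i, R i) p).IsPrimeGraph := by
  refine not_prime_of_subgroup hneg
    (AddSubgroup.comap (Pi.evalAddMonoidHom (fun i => R i) j) (AddSubgroup.closure (pS p (R j))))
    ?_ ?_
  · intro x hx
    have := (mem_pS_pi.1 hx) j
    exact AddSubgroup.subset_closure this
  · intro h
    apply hj
    rw [eq_top_iff]
    intro a _
    have : Function.update (0 : ∀ i, R i) j a ∈
        AddSubgroup.comap (Pi.evalAddMonoidHom (fun i => R i) j)
          (AddSubgroup.closure (pS p (R j))) := by rw [h]; trivial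
    simpa [AddSubgroup.mem_comap, Pi.evalAddMonoidHom] using this
lemma not_prime_of_pT (hι : 2 ≤ Fintype.card ι) (hneg : Hneg (∀ i, R i) p) (j : ι)
    {t : R j} (ht : t ∈ pT p (R j)) (ht0 : t ≠ 0) :
    ¬ (pUnitaryCayley (∀ i, R i) p).IsPrimeGraph := by
  intro hprime
  set X : Set (∀ i, R i) := {x | x j ∈ pT p (R j) ∧ ∀ i, i ≠ j → x i = 0} with hX
  refine hprime X ?_ ⟨?_, ?_⟩
  · -- homogeneous
    intro v hv
    by_cases hvx : ∃ x ∈ X, (pUnitaryCayley (∀ i, R i) p).Adj v x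
    · left
      obtain ⟨x, hx, hadj⟩ := hvx
      rw [adj_iff p hneg] at hadj
      intro x' hx'
      rw [adj_iff p hneg]
      refine ⟨fun h => hv (h ▸ hx'), ?_⟩
      rw [mem_pS_pi]
      intro i
      by_cases hij : i = j
      · subst hij
        have h1 : v i - x i ∈ pS p (R i) := (mem_pS_pi.1 hadj.2) i
        have h2 : x i - x' i ∈ pT p (R i) := pT_sub_mem hx.1 hx'.1
        have := h2 _ h1
        have heq : v i - x i + (x i - x' i) = v i - x' i := by ring
        rwa [heq] at this
      · have h1 : v i - x i ∈ pS p (R i) := (mem_pS_pi.1 hadj.2) i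
        show v i - x' i ∈ pS p (R i)
        rw [hx'.2 i hij, ← hx.2 i hij]
        exact h1
    · right
      intro x hx hadj
      exact hvx ⟨x, hx, hadj⟩
  · refine (Set.one_lt_ncard_iff (Set.toFinite _)).2 ⟨0, Function.update 0 j t, ⟨zero_mem_pT, fun i _ => rfl⟩, ⟨?_, ?_⟩, ?_⟩
    · simpa using ht
    · intro i hij; simp [Function.update_of_ne hij]
    · intro h
      have := congrFun h j
      simp at this
      exact ht0 this.symm
  · obtain ⟨i₀, hi₀⟩ := Fintype.exists_ne_of_one_lt_card (by omega) j
    have hnot : Function.update (0 : ∀ i, R i) i₀ 1 ∉ X := by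
      intro hmem
      have := hmem.2 i₀ hi₀
      simp at this
    have hssub : X ⊂ Set.univ := by
      rw [Set.ssubset_univ_iff]
      intro h
      exact hnot (h ▸ Set.mem_univ _)
    calc X.ncard < (Set.univ : Set (∀ i, R i)).ncard :=
          Set.ncard_lt_ncard hssub (Set.toFinite _)
      _ = Fintype.card (∀ i, R i) := by rw [Set.ncard_univ, Nat.card_eq_fintype_card]
end Necessity
section LocalRing
variable {p : ℕ} {B : Type*} [CommRing B] [IsLocalRing B] [Fintype B]
open IsLocalRing
omit [Fintype B] in
lemma isUnit_one_add {m : B} (hm : m ∈ maximalIdeal B) : IsUnit (1 + m) := by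
  by_contra h
  have h1 : (1 : B) + m ∈ maximalIdeal B := h
  have h2 : (1 : B) ∈ maximalIdeal B := by
    have := Ideal.sub_mem _ h1 hm
    simpa using this
  exact (maximalIdeal B).ne_top_iff_one.mp (Ideal.IsMaximal.ne_top inferInstance) h2
/-- the subgroup 1 + M of units -/
def oneAddM (B : Type*) [CommRing B] [IsLocalRing B] : Subgroup Bˣ where
  carrier := {u | (u : B) - 1 ∈ maximalIdeal B}
  one_mem' := by simp
  mul_mem' := by
    intro u v hu hv
    have h : ((u * v : Bˣ) : B) - 1 = ((u:B) - 1) * ((v:B) - 1) + ((u:B) - 1) + ((v:B) - 1) := by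
      push_cast; ring
    rw [Set.mem_setOf_eq, h]
    exact Ideal.add_mem _ (Ideal.add_mem _ (Ideal.mul_mem_right _ _ hu) hu) hv
  inv_mem' := by
    intro u hu
    have hui : ((u⁻¹ : Bˣ) : B) * (u : B) = 1 := by
      rw [← Units.val_mul, inv_mul_cancel, Units.val_one]
    have h : ((u⁻¹ : Bˣ) : B) - 1 = (-((u⁻¹ : Bˣ) : B)) * ((u : B) - 1) := by
      linear_combination hui
    rw [Set.mem_setOf_eq, h]
    exact Ideal.mul_mem_left _ _ hu
omit [Fintype B] in
lemma card_oneAddM_eq : Nat.card (oneAddM B) = Nat.card (maximalIdeal B) := by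
  refine Nat.card_congr (Equiv.ofBijective (fun u => ⟨(u : Bˣ) - 1, u.2⟩) ⟨?_, ?_⟩)
  · intro u v huv
    have h : ((u : Bˣ) : B) - 1 = ((v : Bˣ) : B) - 1 := congrArg Subtype.val huv
    exact Subtype.ext (Units.ext (sub_left_inj.mp h))
  · rintro ⟨m, hm⟩
    have hmem : (isUnit_one_add hm).unit ∈ oneAddM B := by
      show ((isUnit_one_add hm).unit : B) - 1 ∈ maximalIdeal B
      rw [IsUnit.unit_spec]
      simpa using hm
    refine ⟨⟨(isUnit_one_add hm).unit, hmem⟩, ?_⟩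
    ext
    show ((isUnit_one_add hm).unit : B) - 1 = m
    rw [IsUnit.unit_spec]
    ring
lemma card_oneAddM_not_dvd (hp : p.Prime) (hpu : IsUnit (p : B)) :
    ¬ p ∣ Nat.card (oneAddM B) := by
  intro hdvd
  rw [card_oneAddM_eq] at hdvd
  haveI : Fact p.Prime := ⟨hp⟩
  haveI : Fintype (maximalIdeal B) := Fintype.ofFinite _
  rw [Nat.card_eq_fintype_card] at hdvd
  obtain ⟨m, hm⟩ := exists_prime_addOrderOf_dvd_card (G := maximalIdeal B) p hdvd
  have hm0 : (m : B) ≠ 0 := by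
    intro h
    have hz : m = 0 := Subtype.ext h
    rw [hz, addOrderOf_zero] at hm
    exact hp.ne_one hm.symm
  have hpm : p • (m : B) = 0 := by
    have h : p • m = 0 := by
      rw [← hm]; exact addOrderOf_nsmul_eq_zero m
    exact congrArg Subtype.val h
  rw [nsmul_eq_mul] at hpm
  obtain ⟨v, hv⟩ := hpu
  have : (m : B) = 0 := by
    have h2 := congrArg (fun x => ((v⁻¹ : Bˣ) : B) * x) hpm
    simp only [mul_zero] at h2
    rw [← mul_assoc, ← hv] at h2
    rw [← Units.val_mul, inv_mul_cancel, Units.val_one, one_mul] at h2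
    exact h2
  exact hm0 this
lemma one_add_mem_pS (hp : p.Prime) (hpu : IsUnit (p : B)) {m : B}
    (hm : m ∈ maximalIdeal B) : (1 + m) ∈ pS p B := by
  have hinj : Function.Injective (fun u : oneAddM B => u ^ p) := by
    intro u v huv
    have huv' : u ^ p = v ^ p := huv
    by_contra hne
    have h1 : (u * v⁻¹) ^ p = 1 := by
      rw [mul_pow, inv_pow, huv', mul_inv_cancel]
    have h2 : u * v⁻¹ ≠ 1 := by
      intro h
      exact hne (by rwa [mul_inv_eq_one] at h)
    have horder : orderOf (u * v⁻¹) = p := by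
      have hd := orderOf_dvd_of_pow_eq_one h1
      rcases (Nat.dvd_prime hp).mp hd with h | h
      · exact absurd (orderOf_eq_one_iff.mp h) h2
      · exact h
    exact card_oneAddM_not_dvd hp hpu (horder ▸ orderOf_dvd_natCard _)
  have hsurj : Function.Surjective (fun u : oneAddM B => u ^ p) :=
    Finite.surjective_of_injective hinj
  have hmem : (isUnit_one_add hm).unit ∈ oneAddM B := by
    show ((isUnit_one_add hm).unit : B) - 1 ∈ maximalIdeal B
    rw [IsUnit.unit_spec]; simpa using hm
  obtain ⟨u, hu⟩ := hsurj ⟨_, hmem⟩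
  have hu' : u ^ p = (⟨_, hmem⟩ : oneAddM B) := hu
  refine ⟨(u : Bˣ), ?_⟩
  have hval : ((u : Bˣ) : B) ^ p = (((u ^ p : oneAddM B) : Bˣ) : B) := by
    rw [← Units.val_pow_eq_pow_val]
    norm_cast
  rw [hval, hu']
  exact IsUnit.unit_spec _
end LocalRing
section Binom
variable {B : Type*} [CommRing B]
lemma binom1 (n : ℕ) (x : B) : ∃ d : B, (1 + x) ^ n = 1 + n * x + x ^ 2 * d := by
  induction n with
  | zero => exact ⟨0, by simp⟩
  | succ n ih =>
    obtain ⟨d, hd⟩ := ih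
    refine ⟨d + n + x * d, ?_⟩
    rw [pow_succ, hd]
    push_cast
    ring
lemma binom2 (n : ℕ) (x : B) :
    ∃ d : B, (1 + x) ^ n = 1 + n * x + (n.choose 2 : ℕ) * x ^ 2 + x ^ 3 * d := by
  induction n with
  | zero => exact ⟨0, by simp⟩
  | succ n ih =>
    obtain ⟨d, hd⟩ := ih
    refine ⟨d + (n.choose 2 : ℕ) + x * d, ?_⟩
    rw [pow_succ, hd]
    have hch : ((n+1).choose 2 : ℕ) = n.choose 2 + n := by
      rw [Nat.choose_succ_succ, Nat.choose_one_right]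
      exact Nat.add_comm n (n.choose 2)
    rw [hch]
    push_cast
    ring
end Binom
section LocalRing2
variable {p : ℕ} {B : Type*} [CommRing B] [IsLocalRing B] [Fintype B]
open IsLocalRing
omit [Fintype B] in
lemma p_mem_maximalIdeal (hpu : ¬ IsUnit (p : B)) : (p : B) ∈ maximalIdeal B :=
  (IsLocalRing.mem_maximalIdeal _).mpr hpu
lemma maximalIdeal_eq_span_p (hp : p.Prime) (hpu : ¬ IsUnit (p : B))
    (hcl : AddSubgroup.closure (pS p B) = ⊤) :
    maximalIdeal B = Ideal.span {(p : B)} := by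
  have hpM : (p : B) ∈ maximalIdeal B := p_mem_maximalIdeal hpu
  have hpspan : (p : B) ∈ Ideal.span {(p : B)} := Ideal.subset_span rfl
  -- Step 1 : M ≤ Q := span p ⊔ M^p
  set Q : Ideal B := Ideal.span {(p : B)} ⊔ (maximalIdeal B) ^ p with hQ
  have hQle : Q ≤ maximalIdeal B := by
    rw [hQ]
    refine sup_le ?_ (Ideal.pow_le_self hp.ne_zero)
    rwa [Ideal.span_le, Set.singleton_subset_iff]
  have hQne : Q ≠ ⊤ := fun h =>
    (Ideal.IsMaximal.ne_top (inferInstance : (maximalIdeal B).IsMaximal))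
      (top_le_iff.mp (h ▸ hQle))
  haveI : Nontrivial (B ⧸ Q) := Ideal.Quotient.nontrivial_iff.mpr hQne
  have hpQ : ((p : ℕ) : B ⧸ Q) = 0 := by
    have h : ((p : B) : B ⧸ Q) = 0 := by
      rw [Ideal.Quotient.eq_zero_iff_mem]
      exact le_sup_left (a := Ideal.span {(p:B)}) hpspan
    rwa [map_natCast] at h
  haveI hchar : CharP (B ⧸ Q) p := by
    have hdvd : ringChar (B ⧸ Q) ∣ p := ringChar.dvd hpQ
    rcases (Nat.dvd_prime hp).mp hdvd with h | h
    · exact absurd h CharP.ringChar_ne_one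
    · exact h ▸ ringChar.charP _
  haveI : ExpChar (B ⧸ Q) p := ExpChar.prime hp
  -- Frobenius is surjective on B ⧸ Q
  have hfrob : ∀ b : B, ∃ x : B,
      Ideal.Quotient.mk Q b = (Ideal.Quotient.mk Q x) ^ p := by
    have hsub : pS p B ⊆ ((RingHom.range (frobenius (B ⧸ Q) p)).comap
        (Ideal.Quotient.mk Q) : Subring B) := by
      rintro s ⟨u, rfl⟩
      refine Subring.mem_comap.mpr ⟨Ideal.Quotient.mk Q (u : B), ?_⟩
      rw [frobenius_def]
      exact (map_pow _ _ _).symm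
    have htop : ∀ b : B, b ∈ ((RingHom.range (frobenius (B ⧸ Q) p)).comap
        (Ideal.Quotient.mk Q) : Subring B) := by
      intro b
      have h1 : AddSubgroup.closure (pS p B) ≤
          ((RingHom.range (frobenius (B ⧸ Q) p)).comap
            (Ideal.Quotient.mk Q) : Subring B).toAddSubgroup := by
        rw [AddSubgroup.closure_le]
        exact hsub
      rw [hcl] at h1
      exact h1 trivial
    intro b
    obtain ⟨y, hy⟩ := Subring.mem_comap.mp (htop b)
    obtain ⟨x, rfl⟩ := Ideal.Quotient.mk_surjective y
    rw [frobenius_def, ← map_pow] at hy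
    exact ⟨x, hy.symm⟩
  have hMQ : maximalIdeal B ≤ Q := by
    intro m hm
    obtain ⟨x, hx⟩ := hfrob m
    have hmx : m - x ^ p ∈ Q := by
      rw [← Ideal.Quotient.eq_zero_iff_mem, map_sub, map_pow, hx, sub_self]
    have hxp : x ^ p ∈ maximalIdeal B := by
      have : x ^ p = m - (m - x ^ p) := by ring
      rw [this]
      exact Ideal.sub_mem _ hm (hQle hmx)
    have hxM : x ∈ maximalIdeal B := by
      rw [IsLocalRing.mem_maximalIdeal] at hxp ⊢
      intro hx'
      exact hxp (hx'.pow p)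
    have hxpQ : x ^ p ∈ Q := le_sup_right (a := Ideal.span {(p:B)})
      (Ideal.pow_mem_pow hxM p)
    have : m = (m - x ^ p) + x ^ p := by ring
    rw [this]
    exact Ideal.add_mem _ hmx hxpQ
  -- Step 2 : Nakayama in B ⧸ span p
  haveI : Nontrivial (B ⧸ Ideal.span {(p : B)}) :=
    Ideal.Quotient.nontrivial_iff.mpr (by
      intro h
      exact hpu (Ideal.span_singleton_eq_top.mp h))
  haveI : IsLocalRing (B ⧸ Ideal.span {(p : B)}) :=
    IsLocalRing.of_surjective' (Ideal.Quotient.mk _) Ideal.Quotient.mk_surjective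
  haveI : Finite (B ⧸ Ideal.span {(p : B)}) :=
    Finite.of_surjective _ (Ideal.Quotient.mk_surjective (I := Ideal.span {(p : B)}))
  set mk := Ideal.Quotient.mk (Ideal.span {(p : B)}) with hmk
  set N : Ideal (B ⧸ Ideal.span {(p : B)}) := Ideal.map mk (maximalIdeal B) with hN
  have hNle : N ≤ N • N := by
    have h1 : N ≤ N ^ p := by
      rw [hN]
      have : Ideal.map mk (maximalIdeal B) ≤ Ideal.map mk Q := Ideal.map_mono hMQ
      rw [hQ, Ideal.map_sup, Ideal.map_span, Ideal.map_pow] at this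
      have hz : Ideal.span (mk '' {(p : B)}) = ⊥ := by
        rw [Set.image_singleton]
        have : mk (p : B) = 0 := Ideal.Quotient.eq_zero_iff_mem.mpr hpspan
        rw [this, Ideal.span_singleton_eq_bot.mpr rfl]
      rw [hz, bot_sup_eq] at this
      exact this
    have h2 : N ^ p ≤ N ^ 2 := Ideal.pow_le_pow_right hp.two_le
    have h3 : N ^ 2 = N • N := by rw [pow_two, Ideal.smul_eq_mul]
    exact h3 ▸ (h1.trans h2)
  have hNjac : N ≤ (⊥ : Ideal (B ⧸ Ideal.span {(p : B)})).jacobson := by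
    rw [IsLocalRing.jacobson_eq_maximalIdeal ⊥ bot_ne_top]
    rw [hN, Ideal.map_le_iff_le_comap]
    intro m hm
    rw [Ideal.mem_comap, IsLocalRing.mem_maximalIdeal]
    intro hunit
    obtain ⟨w, hw⟩ := hunit
    obtain ⟨c, hc⟩ := Ideal.Quotient.mk_surjective ((w⁻¹ : _ˣ) : B ⧸ Ideal.span {(p : B)})
    have : mk (m * c - 1) = 0 := by
      rw [map_sub, map_mul, hc, map_one, ← hw]
      simp
    have h1 : m * c - 1 ∈ Ideal.span {(p : B)} := Ideal.Quotient.eq_zero_iff_mem.mp this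
    have h2 : (1 : B) ∈ maximalIdeal B := by
      have : (1 : B) = m * c - (m * c - 1) := by ring
      rw [this]
      exact Ideal.sub_mem _ (Ideal.mul_mem_right _ _ hm)
        ((Ideal.span_le.mpr (Set.singleton_subset_iff.mpr hpM)) h1)
    exact (maximalIdeal B).ne_top_iff_one.mp
      (Ideal.IsMaximal.ne_top inferInstance) h2
  have hNbot : N = ⊥ :=
    Submodule.eq_bot_of_le_smul_of_le_jacobson_bot N N (IsNoetherian.noetherian N) hNle hNjac
  refine le_antisymm ?_ ?_
  · intro m hm
    have : mk m ∈ N := Ideal.mem_map_of_mem mk hm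
    rw [hNbot] at this
    exact Ideal.Quotient.eq_zero_iff_mem.mp this
  · rwa [Ideal.span_le, Set.singleton_subset_iff]
end LocalRing2
section LocalRing3
variable {p : ℕ} {B : Type*} [CommRing B] [IsLocalRing B] [Fintype B]
open IsLocalRing
lemma nilpotent_of_mem_maximalIdeal {x : B} (hx : x ∈ maximalIdeal B) :
    IsNilpotent x := by
  obtain ⟨a, b, hab, he⟩ := Finite.exists_ne_map_eq_of_infinite (fun n : ℕ => x ^ n)
  wlog hlt : a < b generalizing a b
  · exact this b a hab.symm he.symm (by omega)
  have hk : x ^ (b - a) ∈ maximalIdeal B := by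
    have h1 : b - a = (b - a - 1) + 1 := by omega
    rw [h1, pow_succ]
    exact Ideal.mul_mem_left _ _ hx
  have hu : IsUnit (1 + -(x ^ (b - a))) := isUnit_one_add (neg_mem hk)
  refine ⟨a, ?_⟩
  obtain ⟨w, hw⟩ := hu
  have hz : x ^ a * (1 + -(x ^ (b - a))) = 0 := by
    have h2 : x ^ a * x ^ (b - a) = x ^ b := by
      rw [← pow_add]
      congr 1
      omega
    rw [mul_add, mul_neg, h2, mul_one, ← he, add_neg_cancel]
  calc x ^ a = x ^ a * (1 + -(x ^ (b-a))) * ((w⁻¹ : Bˣ) : B) := by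
        rw [← hw, mul_assoc, ← Units.val_mul, mul_inv_cancel, Units.val_one, mul_one]
    _ = 0 := by rw [hz, zero_mul]
lemma one_add_pe_mem_pS (hp : p.Prime) (hodd : Odd p) {e : ℕ} (he : 2 ≤ e)
    (hpe1 : (p : B) ^ (e + 1) = 0) (hpM : (p : B) ∈ maximalIdeal B) (r : B) :
    1 + (p : B) ^ e * r ∈ pS p B := by
  obtain ⟨f, rfl⟩ : ∃ f, e = f + 2 := ⟨e - 2, by omega⟩
  set x : B := (p : B) ^ (f + 1) * r with hxdef
  have hxM : x ∈ maximalIdeal B := by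
    rw [hxdef, pow_succ]
    exact Ideal.mul_mem_right _ _ (Ideal.mul_mem_left _ _ hpM)
  obtain ⟨d, hd⟩ := binom2 p x
  have hpx : (p : B) * x = (p : B) ^ (f + 2) * r := by
    rw [hxdef, ← mul_assoc, ← pow_succ']
  obtain ⟨c, hc⟩ := hp.dvd_choose_self (two_ne_zero) (by
    rcases hodd with ⟨k, hk⟩
    have := hp.two_le
    omega)
  have hppx : (p : B) * x ^ 2 = (p : B) ^ (f + 3) * ((p:B) ^ f * r ^ 2) := by
    rw [hxdef, mul_pow, ← pow_mul]
    have hexp : (p:B) ^ ((f+1)*2 + 1) = (p:B) ^ (f+3) * (p:B) ^ f := by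
      rw [← pow_add]
      congr 1
      omega
    calc (p:B) * ((p:B) ^ ((f+1)*2) * r ^ 2) = (p:B) ^ ((f+1)*2 + 1) * r ^ 2 := by
          rw [← mul_assoc, ← pow_succ']
      _ = (p : B) ^ (f + 3) * ((p:B) ^ f * r ^ 2) := by rw [hexp]; ring
  have hpe1' : (p : B) ^ (f + 3) = 0 := hpe1
  have hterm2 : ((p.choose 2 : ℕ) : B) * x ^ 2 = 0 := by
    rw [hc]
    push_cast
    calc (p:B) * (c:B) * x ^ 2 = (c:B) * ((p:B) * x ^ 2) := by ring
      _ = 0 := by rw [hppx, hpe1', zero_mul, mul_zero]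
  have hterm3 : x ^ 3 * d = 0 := by
    rw [hxdef, mul_pow, ← pow_mul]
    have hexp : (p:B) ^ ((f+1)*3) = (p:B) ^ (f+3) * (p:B) ^ (2*f) := by
      rw [← pow_add]
      congr 1
      omega
    rw [hexp, hpe1', zero_mul, zero_mul, zero_mul]
  have hw := isUnit_one_add hxM
  refine ⟨hw.unit, ?_⟩
  rw [IsUnit.unit_spec, hd, hpx, hterm2, hterm3]
  ring
lemma pe_mem_pT (hp : p.Prime) (hodd : Odd p) {e : ℕ} (he : 2 ≤ e)
    (hpe1 : (p : B) ^ (e + 1) = 0) (hpM : (p : B) ∈ maximalIdeal B) :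
    (p : B) ^ e ∈ pT p B := by
  intro s hs
  obtain ⟨t, ht, hst⟩ := exists_inv_pS p hs
  have h1 : 1 + (p:B)^e * t ∈ pS p B := one_add_pe_mem_pS hp hodd he hpe1 hpM t
  have h2 : s * (1 + (p:B)^e * t) ∈ pS p B := mul_mem_pS p hs h1
  have h3 : s * (1 + (p:B)^e * t) = s + (p:B)^e := by
    have : s * ((p:B)^e * t) = (p:B)^e * (s * t) := by ring
    rw [mul_add, mul_one, this, hst, mul_one]
  rwa [h3] at h2
lemma p_sq_eq_zero (hp : p.Prime) (hpu : ¬ IsUnit (p : B))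
    (hM : maximalIdeal B = Ideal.span {(p : B)}) (hneg : Hneg B p)
    (hT : ∀ c ∈ pT p B, c = 0) : (p : B) ^ 2 = 0 := by
  have hpM : (p : B) ∈ maximalIdeal B := p_mem_maximalIdeal hpu
  have hnil : IsNilpotent (p : B) := nilpotent_of_mem_maximalIdeal hpM
  by_contra hsq
  classical
  have hex : ∃ n, (p : B) ^ n = 0 := hnil
  set n := Nat.find hex with hn
  have hn0 : (p : B) ^ n = 0 := Nat.find_spec hex
  have hmin : ∀ m < n, (p : B) ^ m ≠ 0 := fun m hm => Nat.find_min hex hm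
  have hn3 : 3 ≤ n := by
    by_contra h
    push_neg at h
    have h2n : 2 - (2 - n) + (2 - n) = 2 := by omega
    have : (p : B) ^ 2 = (p:B) ^ n * (p:B) ^ (2 - n) := by
      rw [← pow_add]
      congr 1
      omega
    rw [this, hn0, zero_mul] at hsq
    exact hsq rfl
  set e := n - 1 with hedef
  have he2 : 2 ≤ e := by omega
  have hpe : (p : B) ^ e ≠ 0 := hmin e (by omega)
  have hpe1 : (p : B) ^ (e + 1) = 0 := by
    have : e + 1 = n := by omega
    rw [this, hn0]
  rcases hp.eq_two_or_odd' with hp2 | hodd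
  · -- p = 2 : contradiction with hneg
    subst hp2
    obtain ⟨u, hu⟩ := hneg
    have h2M : (2 : B) ∈ maximalIdeal B := by exact_mod_cast hpM
    have hfact : ((u : B) - 1) * ((u : B) + 1) ∈ maximalIdeal B := by
      have heq : ((u : B) - 1) * ((u : B) + 1) = (u : B) ^ 2 - 1 := by ring
      rw [heq]
      have : ((u : B) : B) ^ (2 : ℕ) = -1 := by exact_mod_cast hu
      rw [this]
      have hm2 : (-1 : B) - 1 = -(2 : B) := by ring
      rw [hm2]
      exact neg_mem h2M
    haveI : (maximalIdeal B).IsPrime := Ideal.IsMaximal.isPrime inferInstance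
    have h2z : (2 : B) = 0 := by
      rcases (Ideal.IsPrime.mem_or_mem inferInstance hfact) with hm | hm
      · -- u = 1 + 2r
        rw [hM, Ideal.mem_span_singleton] at hm
        obtain ⟨r, hr⟩ := hm
        have hueq : (u : B) = 1 + (2:B) * r := by
          have : (u : B) - 1 = (2:B) * r := by exact_mod_cast hr
          linear_combination this
        have husq : ((u:B)) ^ (2:ℕ) = -1 := by exact_mod_cast hu
        rw [hueq] at husq
        have hkey : (2 : B) * (1 + 2 * (r + r ^ 2)) = 0 := by ring_nf; linear_combination husq
        have hu2 : IsUnit (1 + (2:B) * (r + r ^ 2)) :=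
          isUnit_one_add (Ideal.mul_mem_right _ _ h2M)
        obtain ⟨w, hw⟩ := hu2
        calc (2 : B) = 2 * (1 + (2:B) * (r + r^2)) * ((w⁻¹ : Bˣ) : B) := by
              rw [← hw, mul_assoc, ← Units.val_mul, mul_inv_cancel, Units.val_one, mul_one]
          _ = 0 := by rw [hkey, zero_mul]
      · rw [hM, Ideal.mem_span_singleton] at hm
        obtain ⟨r, hr⟩ := hm
        have hueq : (u : B) = -1 + (2:B) * r := by
          have : (u : B) + 1 = (2:B) * r := by exact_mod_cast hr
          linear_combination this
        have husq : ((u:B)) ^ (2:ℕ) = -1 := by exact_mod_cast hu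
        rw [hueq] at husq
        have hkey : (2 : B) * (1 + 2 * (r ^ 2 - r)) = 0 := by ring_nf; linear_combination husq
        have hu2 : IsUnit (1 + (2:B) * (r ^ 2 - r)) :=
          isUnit_one_add (Ideal.mul_mem_right _ _ h2M)
        obtain ⟨w, hw⟩ := hu2
        calc (2 : B) = 2 * (1 + (2:B) * (r^2 - r)) * ((w⁻¹ : Bˣ) : B) := by
              rw [← hw, mul_assoc, ← Units.val_mul, mul_inv_cancel, Units.val_one, mul_one]
          _ = 0 := by rw [hkey, zero_mul]
    have : ((2:ℕ) : B) ^ 1 = 0 := by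
      rw [pow_one]
      exact_mod_cast h2z
    exact hmin 1 (by omega) this
  · -- p odd
    have := hT _ (pe_mem_pT hp hodd he2 hpe1 hpM)
    exact hpe this
lemma isField_of_p_unit (hp : p.Prime) (hpu : IsUnit (p : B))
    (hT : ∀ c ∈ pT p B, c = 0) : IsField B := by
  rw [IsLocalRing.isField_iff_maximalIdeal_eq]
  rw [eq_bot_iff]
  intro m hm
  refine hT m ?_
  intro s hs
  obtain ⟨t, ht, hst⟩ := exists_inv_pS p hs
  have h1 : 1 + t * m ∈ pS p B :=
    one_add_mem_pS hp hpu (Ideal.mul_mem_left _ _ hm)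
  have h2 : s * (1 + t * m) ∈ pS p B := mul_mem_pS p hs h1
  have h3 : s * (1 + t * m) = s + m := by
    have h4 : s * (t * m) = (s * t) * m := by ring
    rw [mul_add, mul_one, h4, hst, one_mul]
  rwa [h3] at h2
end LocalRing3
section PTTrivial
variable {p : ℕ} {B : Type*} [CommRing B] [IsLocalRing B] [Fintype B]
open IsLocalRing
omit [IsLocalRing B] [Fintype B] in
lemma pT_add_mem {a b : B} (ha : a ∈ pT p B) (hb : b ∈ pT p B) : a + b ∈ pT p B := by
  intro s hs
  have h1 := ha s hs
  have h2 := hb _ h1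
  rwa [add_assoc] at h2
omit [IsLocalRing B] in
lemma pT_smul_mem (hcl : AddSubgroup.closure (pS p B) = ⊤) {c : B} (hc : c ∈ pT p B)
    (x : B) : x * c ∈ pT p B := by
  -- V := {x | x * c ∈ pT} is an additive subgroup containing pS
  have hmem : ∀ x : B, x ∈ AddSubgroup.closure (pS p B) → x * c ∈ pT p B := by
    intro x hx
    induction hx using AddSubgroup.closure_induction with
    | mem s' hs' =>
      intro s hs
      obtain ⟨t, ht, hst⟩ := exists_inv_pS p hs'
      have h1 : t * s ∈ pS p B := mul_mem_pS p ht hs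
      have h2 : t * s + c ∈ pS p B := hc _ h1
      have h3 : s' * (t * s + c) ∈ pS p B := mul_mem_pS p hs' h2
      have h4 : s' * (t * s + c) = s + s' * c := by
        have h5 : s' * (t * s) = (s' * t) * s := by ring
        rw [mul_add, h5, hst, one_mul]
      rwa [h4] at h3
    | zero => simpa using zero_mem_pT
    | add y z _ _ hy hz =>
      have := pT_add_mem hy hz
      rwa [← add_mul] at this
    | neg y _ hy =>
      have := pT_sub_mem zero_mem_pT hy
      rw [zero_sub] at this
      rwa [← neg_mul] at this
  exact hmem x (by rw [hcl]; trivial)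
omit [IsLocalRing B] in
lemma one_not_mem_pT [Nontrivial B] (hneg : Hneg B p) : (1 : B) ∉ pT p B := by
  intro h1
  have hm1 : (-1 : B) ∈ pS p B := neg_mem_pS p hneg (one_mem_pS p)
  have := h1 _ hm1
  rw [neg_add_cancel] at this
  exact zero_not_mem_pS p this
lemma pT_trivial_of_isField (hneg : Hneg B p)
    (hcl : AddSubgroup.closure (pS p B) = ⊤) (hf : IsField B) :
    ∀ c ∈ pT p B, c = 0 := by
  intro c hc
  by_contra hc0
  obtain ⟨d, hd⟩ := hf.mul_inv_cancel hc0
  have h1 : d * c ∈ pT p B := pT_smul_mem hcl hc d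
  rw [mul_comm, hd] at h1
  exact one_not_mem_pT hneg h1
lemma pT_trivial_of_span_p (hp : p.Prime) (hneg : Hneg B p)
    (hcl : AddSubgroup.closure (pS p B) = ⊤)
    (hM : maximalIdeal B = Ideal.span {(p : B)}) (hp2 : (p : B) ^ 2 = 0) :
    ∀ c ∈ pT p B, c = 0 := by
  intro c hc
  -- c is not a unit
  have hcM : c ∈ maximalIdeal B := by
    rw [IsLocalRing.mem_maximalIdeal]
    intro hunit
    obtain ⟨w, hw⟩ := hunit
    have h1 : ((w⁻¹ : Bˣ) : B) * c ∈ pT p B := pT_smul_mem hcl hc _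
    rw [← hw, ← Units.val_mul, inv_mul_cancel, Units.val_one] at h1
    exact one_not_mem_pT hneg h1
  rw [hM, Ideal.mem_span_singleton] at hcM
  obtain ⟨r, rfl⟩ := hcM
  -- 1 + p*r ∈ pS
  have h1 : 1 + (p : B) * r ∈ pS p B := by
    have := hc _ (one_mem_pS p)
    simpa using this
  obtain ⟨u, hu⟩ := h1
  have hpM : (p : B) ∈ maximalIdeal B := by
    rw [hM]
    exact Ideal.subset_span rfl
  have hpk : ((p : ℕ) : IsLocalRing.ResidueField B) = 0 := by
    have h : (IsLocalRing.residue B) ((p : ℕ) : B) = 0 :=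
      (IsLocalRing.residue_eq_zero_iff _).mpr hpM
    rwa [map_natCast] at h
  haveI hchark : CharP (IsLocalRing.ResidueField B) p := by
    have hdvd : ringChar (IsLocalRing.ResidueField B) ∣ p := ringChar.dvd hpk
    rcases (Nat.dvd_prime hp).mp hdvd with h | h
    · exact absurd h CharP.ringChar_ne_one
    · exact h ▸ ringChar.charP _
  haveI : ExpChar (IsLocalRing.ResidueField B) p := ExpChar.prime hp
  have hresu : IsLocalRing.residue B (u : B) = 1 := by
    apply frobenius_inj (IsLocalRing.ResidueField B) p
    rw [frobenius_def, frobenius_def, one_pow, ← map_pow, hu, map_add, map_one, map_mul]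
    have h0 : IsLocalRing.residue B ((p : ℕ) : B) = 0 :=
      (IsLocalRing.residue_eq_zero_iff _).mpr hpM
    rw [h0, zero_mul, add_zero]
  -- u = 1 + p * s
  have humem : (u : B) - 1 ∈ maximalIdeal B := by
    rw [← IsLocalRing.residue_eq_zero_iff, map_sub, map_one, hresu, sub_self]
  rw [hM, Ideal.mem_span_singleton] at humem
  obtain ⟨s, hs⟩ := humem
  have hueq : (u : B) = 1 + (p : B) * s := by linear_combination hs
  -- u ^ p = 1
  obtain ⟨d, hd⟩ := binom1 p ((p : B) * s)
  have hup : (u : B) ^ p = 1 := by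
    rw [hueq, hd]
    have e1 : (p : B) * ((p : B) * s) = 0 := by
      have h6 : (p:B) * ((p:B) * s) = (p:B)^2 * s := by ring
      rw [h6, hp2, zero_mul]
    have e2 : ((p : B) * s) ^ 2 * d = 0 := by
      have h7 : ((p:B) * s)^2 * d = (p:B)^2 * (s^2 * d) := by ring
      rw [h7, hp2, zero_mul]
    rw [e1, e2, add_zero, add_zero]
  rw [hup] at hu
  linear_combination -hu
end PTTrivial
section Sufficiency
variable {p : ℕ} {ι : Type*} [Fintype ι] [DecidableEq ι] {R : ι → Type*} [∀ i, CommRing (R i)]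
  [∀ i, IsLocalRing (R i)] [∀ i, Fintype (R i)]
lemma homogeneous_eq_univ (hι : 2 ≤ Fintype.card ι) (hneg : Hneg (∀ i, R i) p)
    (hcl_i : ∀ i, AddSubgroup.closure (pS p (R i)) = ⊤)
    (hcl : AddSubgroup.closure (pS p (∀ i, R i)) = ⊤)
    (hT : ∀ i, ∀ c ∈ pT p (R i), c = 0)
    (X : Set (∀ i, R i)) (hhom : (pUnitaryCayley (∀ i, R i) p).IsHomogeneousSet X)
    (h0 : (0 : ∀ i, R i) ∈ X) (d : ∀ i, R i) (hd : d ∈ X) (hd0 : d ≠ 0) :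
    X = Set.univ := by
  have hnegi : ∀ i, Hneg (R i) p := hneg_pi_component hneg
  -- Step 1 : a coordinate where d is nonzero
  obtain ⟨j, hj⟩ : ∃ j, d j ≠ 0 := by
    by_contra h
    push_neg at h
    exact hd0 (funext h)
  -- Step 2 : σ ∈ S_j with σ - d j ∉ S_j
  obtain ⟨σ, hσS, hσ⟩ : ∃ σ ∈ pS p (R j), σ - d j ∉ pS p (R j) := by
    by_contra h
    push_neg at h
    have hmem : -(d j) ∈ pT p (R j) := by
      intro s hs
      have := h s hs
      rwa [sub_eq_add_neg] at this
    have := hT j _ hmem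
    rw [neg_eq_zero] at this
    exact hj this
  -- Step 3 : the grid slab Σ lies in X
  have hSig : ∀ s : (∀ i, R i), s ∈ pS p (∀ i, R i) → s j = σ → s ∈ X := by
    intro s hs hsj
    by_contra hsX
    have hadj0 : (pUnitaryCayley (∀ i, R i) p).Adj s 0 := by
      rw [adj_iff p hneg]
      constructor
      · intro h
        have hmem := (mem_pS_pi.1 hs) j
        rw [h] at hmem
        exact zero_not_mem_pS p (by simpa using hmem)
      · simpa using hs
    have hnadjd : ¬ (pUnitaryCayley (∀ i, R i) p).Adj s d := by
      rw [adj_iff p hneg]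
      rintro ⟨-, hmem⟩
      exact hσ (by simpa [hsj] using (mem_pS_pi.1 hmem) j)
    rcases hhom s hsX with hall | hnone
    · exact hnadjd (hall d hd)
    · exact hnone 0 h0 hadj0
  -- the canonical element of Σ
  have hs₀ : ∃ s₀ : (∀ i, R i), s₀ ∈ X ∧ s₀ j = σ := by
    refine ⟨Function.update (fun i => (1 : R i)) j σ, ?_, Function.update_self _ _ _⟩
    refine hSig _ ?_ (Function.update_self _ _ _)
    rw [mem_pS_pi]
    intro i
    by_cases h : i = j
    · subst h; rw [Function.update_self]; exact hσS
    · rw [Function.update_of_ne h]; exact one_mem_pS p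
  obtain ⟨s₀, hs₀X, hs₀j⟩ := hs₀
  -- Step 4 : absorption principle
  have habs : ∀ (i₀ : ι) (xa : ∀ i, R i), xa ∈ X → ∀ x ∈ X, ∀ s ∈ pS p (∀ i, R i),
      (x + s) i₀ = xa i₀ → x + s ∈ X := by
    intro i₀ xa hxa x hx s hs hcoord
    by_contra hv
    have hadj1 : (pUnitaryCayley (∀ i, R i) p).Adj (x + s) x := by
      rw [adj_iff p hneg]
      constructor
      · intro h
        have hs0 : s = 0 := by
          have := congrArg (fun y => y - x) h
          simpa using this
        apply zero_not_mem_pS (p := p) (B := R i₀)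
        have := (mem_pS_pi.1 hs) i₀
        rwa [hs0] at this
      · simpa using hs
    have hnadj2 : ¬ (pUnitaryCayley (∀ i, R i) p).Adj (x + s) xa := by
      rw [adj_iff p hneg]
      rintro ⟨-, hmem⟩
      have := (mem_pS_pi.1 hmem) i₀
      have hzero : (x + s - xa) i₀ = 0 := by
        show (x + s) i₀ - xa i₀ = 0
        rw [hcoord, sub_self]
      rw [hzero] at this
      exact zero_not_mem_pS p this
    rcases hhom (x + s) hv with hall | hnone
    · exact hnadj2 (hall xa hxa)
    · exact hnone x hx hadj1
  -- Step 5 : the bouncing slabs U_m ⊆ X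
  set c : ℕ → R j := fun m => if Even m then 0 else σ with hc
  have hU : ∀ m (v : ∀ i, R i), v j = c m → (∀ i, i ≠ j → v i ∈ pSum p (R i) m) →
      v ∈ X := by
    intro m
    induction m with
    | zero =>
      intro v hvj hvi
      have hv0 : v = 0 := by
        funext i
        by_cases h : i = j
        · subst h
          rw [hvj, hc]
          simp
        · exact hvi i h
      rw [hv0]
      exact h0
    | succ m ih =>
      intro v hvj hvi
      -- decompose each coordinate
      have hch : ∀ i, ∃ as : R i × R i, as.1 ∈ pSum p (R i) m ∧ as.2 ∈ pS p (R i) ∧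
          (i ≠ j → v i = as.1 + as.2) := by
        intro i
        by_cases h : i = j
        · obtain ⟨a, ha⟩ := pSum_nonempty (p := p) (B := R i) m
          exact ⟨(a, 1), ha, one_mem_pS p, fun hne => absurd h hne⟩
        · obtain ⟨a, ha, s, hs, hv⟩ := hvi i h
          exact ⟨(a, s), ha, hs, fun _ => hv⟩
      choose f hf1 hf2 hf3 using hch
      set sj : R j := if Even m then σ else -σ with hsj
      have hsjS : sj ∈ pS p (R j) := by
        rw [hsj]
        by_cases h : Even m
        · simp only [if_pos h]; exact hσS
        · simp only [if_neg h]; exact neg_mem_pS p (hnegi j) hσS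
      set w : ∀ i, R i := Function.update (fun i => (f i).1) j (c m) with hw
      set sv : ∀ i, R i := Function.update (fun i => (f i).2) j sj with hsv
      have hveq : v = w + sv := by
        funext i
        by_cases h : i = j
        · subst h
          show v i = w i + sv i
          rw [hw, hsv, Function.update_self, Function.update_self, hvj]
          simp only [hc, hsj]
          by_cases hm : Even m
          · have hodd : ¬ Even (m + 1) := by simp [Nat.even_add_one, hm]
            simp [hm, hodd]
          · have hev : Even (m + 1) := by simp [Nat.even_add_one, hm]
            simp [hm, hev]
        · show v i = w i + sv i
          rw [hw, hsv, Function.update_of_ne h, Function.update_of_ne h]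
          exact hf3 i h
      have hwX : w ∈ X := by
        apply ih
        · rw [hw, Function.update_self]
        · intro i hij
          rw [hw, Function.update_of_ne hij]
          exact hf1 i
      have hsvS : sv ∈ pS p (∀ i, R i) := by
        rw [mem_pS_pi]
        intro i
        by_cases h : i = j
        · subst h; rw [hsv, Function.update_self]; exact hsjS
        · rw [hsv, Function.update_of_ne h]; exact hf2 i
      -- pick the anchor
      by_cases hm : Even m
      · -- c (m+1) = σ ; anchor s₀
        have hanchor : (w + sv) j = s₀ j := by
          rw [← hveq, hvj, hs₀j]
          simp only [hc]
          have hodd : ¬ Even (m + 1) := by simp [Nat.even_add_one, hm]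
          simp [hodd]
        have := habs j s₀ hs₀X w hwX sv hsvS hanchor
        rwa [← hveq] at this
      · -- c (m+1) = 0 ; anchor 0
        have hanchor : (w + sv) j = (0 : ∀ i, R i) j := by
          rw [← hveq, hvj]
          simp only [hc]
          have hev : Even (m + 1) := by simp [Nat.even_add_one, hm]
          simp [hev]
        have := habs j 0 h0 w hwX sv hsvS hanchor
        rwa [← hveq] at this
  -- Step 6 : full projection at some i₀ ≠ j
  obtain ⟨i₀, hi₀⟩ := Fintype.exists_ne_of_one_lt_card (by omega) j
  have hproj : ∀ a : R i₀, ∃ x ∈ X, x i₀ = a := by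
    intro a
    have ha : a ∈ AddSubgroup.closure (pS p (R i₀)) := by rw [hcl_i i₀]; trivial
    obtain ⟨m, hm⟩ := mem_pSum_of_closure (hnegi i₀) ha
    have hwit : ∀ i, ∃ y : R i, y ∈ pSum p (R i) m := fun i => pSum_nonempty m
    choose wit hwit using hwit
    set v : ∀ i, R i := Function.update (Function.update wit i₀ a) j (c m) with hv
    refine ⟨v, ?_, ?_⟩
    · apply hU m
      · rw [hv, Function.update_self]
      · intro i hij
        rw [hv, Function.update_of_ne hij]
        by_cases h : i = i₀
        · subst h; rw [Function.update_self]; exact hm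
        · rw [Function.update_of_ne h]; exact hwit i
    · rw [hv, Function.update_of_ne hi₀, Function.update_self]
  -- Step 7 : X + S ⊆ X
  have hXS : ∀ x ∈ X, ∀ s ∈ pS p (∀ i, R i), x + s ∈ X := by
    intro x hx s hs
    obtain ⟨xa, hxa, hcoord⟩ := hproj ((x + s) i₀)
    exact habs i₀ xa hxa x hx s hs hcoord.symm
  -- Step 8 : all sumsets lie in X
  have hPm : ∀ m, ∀ y ∈ pSum p (∀ i, R i) m, y ∈ X := by
    intro m
    induction m with
    | zero =>
      intro y hy
      have : y = 0 := hy
      rw [this]; exact h0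
    | succ m ih =>
      rintro y ⟨a, ha, s, hs, rfl⟩
      exact hXS a (ih a ha) s hs
  -- Step 9 : conclude
  rw [Set.eq_univ_iff_forall]
  intro y
  have hy : y ∈ AddSubgroup.closure (pS p (∀ i, R i)) := by rw [hcl]; trivial
  obtain ⟨m, hm⟩ := mem_pSum_of_closure hneg hy
  exact hPm m y hm
end Sufficiency
section Main
variable {p : ℕ}
lemma homogeneous_translate {B : Type*} [CommRing B] (hneg : Hneg B p) (X : Set B)
    (hhom : (pUnitaryCayley B p).IsHomogeneousSet X) (c : B) :
    (pUnitaryCayley B p).IsHomogeneousSet ((fun x => x + c) '' X) := by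
  intro v hv
  have hvc : v - c ∉ X := fun h => hv ⟨v - c, h, by ring⟩
  have hadj : ∀ x, (pUnitaryCayley B p).Adj v (x + c) ↔
      (pUnitaryCayley B p).Adj (v - c) x := by
    intro x
    rw [adj_iff p hneg, adj_iff p hneg]
    have h1 : v - (x + c) = (v - c) - x := by ring
    constructor
    · rintro ⟨hne, hm⟩
      exact ⟨fun h => hne (by rw [← h]; ring), by rwa [h1] at hm⟩
    · rintro ⟨hne, hm⟩
      exact ⟨fun h => hne (by rw [h]; ring), by rwa [← h1] at hm⟩
  rcases hhom (v - c) hvc with hall | hnone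
  · left
    rintro x ⟨y, hy, rfl⟩
    exact (hadj y).2 (hall y hy)
  · right
    rintro x ⟨y, hy, rfl⟩ hAdj
    exact hnone y hy ((hadj y).1 hAdj)
variable {ι : Type*} [Fintype ι] [DecidableEq ι] {R : ι → Type*} [∀ i, CommRing (R i)]
  [∀ i, IsLocalRing (R i)] [∀ i, Fintype (R i)]
lemma isPrime_of_conditions (hι : 2 ≤ Fintype.card ι) (hneg : Hneg (∀ i, R i) p)
    (hcl_i : ∀ i, AddSubgroup.closure (pS p (R i)) = ⊤)
    (hcl : AddSubgroup.closure (pS p (∀ i, R i)) = ⊤)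
    (hT : ∀ i, ∀ c ∈ pT p (R i), c = 0) :
    (pUnitaryCayley (∀ i, R i) p).IsPrimeGraph := by
  rintro X hhom ⟨h2, hlt⟩
  obtain ⟨a, b, ha, hb, hab⟩ := (Set.one_lt_ncard_iff (Set.toFinite _)).1 h2
  set X' : Set (∀ i, R i) := (fun x => x + (-b)) '' X with hX'
  have hhom' := homogeneous_translate hneg X hhom (-b)
  have h0' : (0 : ∀ i, R i) ∈ X' := ⟨b, hb, by ring⟩
  have hd' : a + (-b) ∈ X' := ⟨a, ha, rfl⟩
  have hd0 : a + (-b) ≠ 0 := by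
    intro h
    apply hab
    have := congrArg (fun y => y + b) h
    simpa using this
  have huniv := homogeneous_eq_univ hι hneg hcl_i hcl hT X' hhom' h0' _ hd' hd0
  have hcard : X'.ncard = X.ncard :=
    Set.ncard_image_of_injective _ (add_left_injective _)
  rw [huniv, Set.ncard_univ, Nat.card_eq_fintype_card] at hcard
  omega
end Main
end PUC
theorem stmt_19 (p : ℕ) (hp : p.Prime) (ι : Type*) [Fintype ι] [DecidableEq ι] (hι : 2 ≤ Fintype.card ι)
    (R : ι → Type*) [∀ i, CommRing (R i)] [∀ i, IsLocalRing (R i)] [∀ i, Fintype (R i)]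
    (hneg : ∃ u : (∀ i, R i)ˣ, (u : ∀ i, R i) ^ p = -1) :
    (pUnitaryCayley (∀ i, R i) p).IsPrimeGraph ↔
      ((∀ i, (pUnitaryCayley (R i) p).Connected) ∧
        (pUnitaryCayley (∀ i, R i) p).Connected ∧
        (∀ i, IsUnit (p : R i) → IsField (R i)) ∧
        (∀ i, ¬ IsUnit (p : R i) →
          IsLocalRing.maximalIdeal (R i) = Ideal.span {(p : R i)} ∧
            (p : R i) ^ 2 = 0)) := by
  have hneg' : PUC.Hneg (∀ i, R i) p := hneg
  have hnegi : ∀ i, PUC.Hneg (R i) p := PUC.hneg_pi_component hneg'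
  haveI : Nonempty ι := Fintype.card_pos_iff.mp (by omega)
  haveI : Nontrivial (∀ i, R i) := Pi.nontrivial_at (Classical.arbitrary ι)
  constructor
  · -- necessity
    intro hprime
    -- factor connectivity
    have hcl_i : ∀ i, AddSubgroup.closure (PUC.pS p (R i)) = ⊤ := by
      intro i
      by_contra h
      exact PUC.not_prime_of_factor_not_closed hneg' i h hprime
    -- stabilizers trivial
    have hT : ∀ i, ∀ c ∈ PUC.pT p (R i), c = 0 := by
      intro i c hc
      by_contra hc0
      exact PUC.not_prime_of_pT hι hneg' i hc hc0 hprime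
    refine ⟨?_, ?_, ?_, ?_⟩
    · intro i
      exact (PUC.connected_iff p (hnegi i)).mpr (hcl_i i)
    · refine (PUC.connected_iff p hneg').mpr ?_
      by_contra h
      exact PUC.not_prime_of_subgroup hneg' _ AddSubgroup.subset_closure h hprime
    · intro i hpu
      exact PUC.isField_of_p_unit hp hpu (hT i)
    · intro i hpu
      have hM := PUC.maximalIdeal_eq_span_p hp hpu (hcl_i i)
      exact ⟨hM, PUC.p_sq_eq_zero hp hpu hM (hnegi i) (hT i)⟩
  · -- sufficiency
    rintro ⟨hconn_i, hconn, hfield, hspan⟩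
    have hcl_i : ∀ i, AddSubgroup.closure (PUC.pS p (R i)) = ⊤ := fun i =>
      (PUC.connected_iff p (hnegi i)).mp (hconn_i i)
    have hcl : AddSubgroup.closure (PUC.pS p (∀ i, R i)) = ⊤ :=
      (PUC.connected_iff p hneg').mp hconn
    have hT : ∀ i, ∀ c ∈ PUC.pT p (R i), c = 0 := by
      intro i
      by_cases hpu : IsUnit (p : R i)
      · exact PUC.pT_trivial_of_isField (hnegi i) (hcl_i i) (hfield i hpu)
      · obtain ⟨hM, hp2⟩ := hspan i hpu
        exact PUC.pT_trivial_of_span_p hp (hnegi i) (hcl_i i) hM hp2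
    exact PUC.isPrime_of_conditions hι hneg' hcl_i hcl hT
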